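/- arXiv:2605.08866 — 5 statements merged into one kernel-verified Lean document; each statement's English description precedes it below -/
import Mathlib

section
/- Fix a real number β ∈ (0,1) and integers d ≥ 1 and T ≥ 1 with T ≥ 2(d + log(1/β)). Set ε := (2/T)(d + log(1/β)) (so that ε ∈ (0,1]). Then the binomial lower tail satisfies Φ(d,T,ε) = Σ_{i=0}^{d-1} C(T,i) ε^i (1−ε)^{T−i} ≤ β. -/
/-- Lemma `epsilon_T_order`: for `β ∈ (0,1)`, `d ≥ 1`, `T ≥ 1` with
`T ≥ 2(d + log(1/β))`, the choice `ε = (2/T)(d + log(1/β))` makes the binomial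
lower tail `Σ_{i=0}^{d-1} C(T,i) ε^i (1-ε)^{T-i}` at most `β`. -/
theorem binomial_tail_le_beta (β : ℝ) (hβ0 : 0 < β) (hβ1 : β < 1)
    (d T : ℕ) (hd : 1 ≤ d) (hT : 1 ≤ T)
    (hTd : 2 * ((d : ℝ) + Real.log (1 / β)) ≤ (T : ℝ)) :
    (let ε : ℝ := (2 / (T : ℝ)) * ((d : ℝ) + Real.log (1 / β));
      ∑ i ∈ Finset.range d,
        (T.choose i : ℝ) * ε ^ i * (1 - ε) ^ (T - i)) ≤ β := by
  show ∑ i ∈ Finset.range d, (T.choose i : ℝ) * ((2 / (T : ℝ)) * ((d : ℝ) + Real.log (1 / β))) ^ i * (1 - ((2 / (T : ℝ)) * ((d : ℝ) + Real.log (1 / β)))) ^ (T - i) ≤ β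
  set ε : ℝ := (2 / (T : ℝ)) * ((d : ℝ) + Real.log (1 / β)) with hεdef
  set L : ℝ := Real.log (1 / β) with hLdef
  have hT0 : (0:ℝ) < T := by exact_mod_cast hT
  have hL : 0 < L := by
    have := Real.log_neg hβ0 hβ1
    rw [hLdef, one_div, Real.log_inv]; linarith
  have hd0 : (1:ℝ) ≤ (d:ℝ) := by exact_mod_cast hd
  have hε0 : 0 < ε := by
    have : (0:ℝ) < (d:ℝ) + L := by linarith
    exact mul_pos (div_pos two_pos hT0) this
  have hε1 : ε ≤ 1 := by
    rw [show ε = 2 * ((d:ℝ) + L) / T by ring, div_le_one hT0]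
    linarith
  have hεT : ε * T = 2 * ((d:ℝ) + L) := by
    rw [hεdef]; field_simp
  have hdT : d ≤ T := by
    have : (d:ℝ) ≤ (T:ℝ) := by linarith
    exact_mod_cast this
  have hterm_nonneg : ∀ i : ℕ, 0 ≤ (ε/2) ^ i * (1-ε) ^ (T-i) * (T.choose i : ℝ) := by
    intro i
    have h1 : 0 ≤ ε/2 := by linarith
    have h2 : 0 ≤ 1 - ε := by linarith
    positivity
  have key : ∀ i ∈ Finset.range d,
      (T.choose i : ℝ) * ε ^ i * (1 - ε) ^ (T - i)
        ≤ 2 ^ (d-1) * ((ε/2) ^ i * (1-ε) ^ (T-i) * (T.choose i : ℝ)) := by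
    intro i hi
    have hi' : i ≤ d - 1 := Nat.le_sub_one_of_lt (Finset.mem_range.mp hi)
    have h2 : (2:ℝ) ^ i ≤ 2 ^ (d-1) := pow_le_pow_right₀ (by norm_num) hi'
    have hεi : ε ^ i = 2 ^ i * (ε/2) ^ i := by
      rw [← mul_pow]; ring_nf
    have h1 : 0 ≤ 1 - ε := by linarith
    have hnn : 0 ≤ (ε/2) ^ i * (1-ε) ^ (T-i) * (T.choose i : ℝ) := hterm_nonneg i
    calc (T.choose i : ℝ) * ε ^ i * (1 - ε) ^ (T - i)
        = 2 ^ i * ((ε/2) ^ i * (1-ε) ^ (T-i) * (T.choose i : ℝ)) := by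
          rw [hεi]; ring
      _ ≤ 2 ^ (d-1) * ((ε/2) ^ i * (1-ε) ^ (T-i) * (T.choose i : ℝ)) :=
          mul_le_mul_of_nonneg_right h2 hnn
  calc ∑ i ∈ Finset.range d, (T.choose i : ℝ) * ε ^ i * (1 - ε) ^ (T - i)
      ≤ ∑ i ∈ Finset.range d,
          2 ^ (d-1) * ((ε/2) ^ i * (1-ε) ^ (T-i) * (T.choose i : ℝ)) :=
        Finset.sum_le_sum key
    _ = 2 ^ (d-1) * ∑ i ∈ Finset.range d,
          (ε/2) ^ i * (1-ε) ^ (T-i) * (T.choose i : ℝ) := by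
        rw [Finset.mul_sum]
    _ ≤ 2 ^ (d-1) * ∑ i ∈ Finset.range (T+1),
          (ε/2) ^ i * (1-ε) ^ (T-i) * (T.choose i : ℝ) := by
        have hsub : Finset.range d ⊆ Finset.range (T+1) :=
          Finset.range_subset_range.mpr (by omega)
        have := Finset.sum_le_sum_of_subset_of_nonneg hsub
          (fun i _ _ => hterm_nonneg i)
        have h2 : (0:ℝ) ≤ 2 ^ (d-1) := by positivity
        exact mul_le_mul_of_nonneg_left this h2
    _ = 2 ^ (d-1) * (ε/2 + (1-ε)) ^ T := by rw [add_pow]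
    _ = 2 ^ (d-1) * (1 - ε/2) ^ T := by ring_nf
    _ ≤ 2 ^ (d-1) * Real.exp (-(ε/2)) ^ T := by
        have h1 : 0 ≤ 1 - ε/2 := by linarith
        have h2 : 1 - ε/2 ≤ Real.exp (-(ε/2)) := by
          have := Real.add_one_le_exp (-(ε/2)); linarith
        have h3 : (0:ℝ) ≤ 2 ^ (d-1) := by positivity
        exact mul_le_mul_of_nonneg_left (pow_le_pow_left₀ h1 h2 T) h3
    _ = 2 ^ (d-1) * Real.exp (-(ε * T / 2)) := by
        rw [← Real.exp_nat_mul]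
        congr 1
        ring
    _ = 2 ^ (d-1) * (Real.exp (-(d:ℝ)) * β) := by
        rw [hεT]
        rw [show -(2 * ((d:ℝ) + L) / 2) = -(d:ℝ) + -L by ring, Real.exp_add]
        congr 1
        rw [hLdef, one_div, Real.log_inv, neg_neg, Real.exp_log hβ0]
    _ ≤ β := by
        have h2e : (2:ℝ) ^ (d-1) ≤ Real.exp d := by
          calc (2:ℝ) ^ (d-1) ≤ 2 ^ d := pow_le_pow_right₀ (by norm_num) (Nat.sub_le d 1)
            _ ≤ Real.exp 1 ^ d := pow_le_pow_left₀ (by norm_num)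
                (by have := Real.add_one_le_exp (1:ℝ); linarith) d
            _ = Real.exp d := by rw [← Real.exp_nat_mul]; ring_nf
        have hexp : 0 < Real.exp (-(d:ℝ)) := Real.exp_pos _
        have h1 : 2 ^ (d-1) * Real.exp (-(d:ℝ)) ≤ 1 := by
          have := mul_le_mul_of_nonneg_right h2e hexp.le
          rw [← Real.exp_add] at this
          simpa using this
        nlinarith [h1, hβ0.le]
end

section
/- Let (Ω, ℱ, P) be a probability space, d ≥ 1 an integer, δ : Ω → ℝ^d a measurable map, θ ∈ ℝ^d with θ ≠ 0, and let B > 0, λ > 0, ε ∈ [0,1]. Let M ∈ ℱ be an event. Assume: (i) ⟨θ, δ(ω)⟩ ≥ 0 for P-almost every ω; (ii) ‖δ(ω)‖₂ ≤ B for P-almost every ω; (iii) P(⟨θ, δ⟩ > 0) ≤ ε; and (iv) E[1_M · ⟨θ, δ⟩²] ≥ λ ‖θ‖₂² P(M). Then P(M) ≤ ε B² / λ. -/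
open MeasureTheory

/-- Measure-theoretic core of the action-level guarantee via covariance diversity:
if `⟪θ,δ⟫ ≥ 0` a.s., `‖δ‖ ≤ B` a.s., `P(⟪θ,δ⟫ > 0) ≤ ε`, and the conditional
covariance-diversity bound `E[1_M ⟪θ,δ⟫²] ≥ λ‖θ‖² P(M)` holds, then
`P(M) ≤ ε B² / λ`. -/
theorem action_mismatch_le_of_covariance_diversity
    {Ω : Type*} [MeasurableSpace Ω] (P : Measure Ω) [IsProbabilityMeasure P]
    {d : ℕ} (hd : 1 ≤ d)
    (δ : Ω → EuclideanSpace ℝ (Fin d)) (hδ : Measurable δ)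
    (θ : EuclideanSpace ℝ (Fin d)) (hθ : θ ≠ 0)
    (B lam ε : ℝ) (hB : 0 < B) (hlam : 0 < lam) (hε0 : 0 ≤ ε) (hε1 : ε ≤ 1)
    (M : Set Ω) (hM : MeasurableSet M)
    (h1 : ∀ᵐ ω ∂P, 0 ≤ (inner ℝ θ (δ ω) : ℝ))
    (h2 : ∀ᵐ ω ∂P, ‖δ ω‖ ≤ B)
    (h3 : (P {ω | 0 < (inner ℝ θ (δ ω) : ℝ)}).toReal ≤ ε)
    (h4 : lam * ‖θ‖ ^ 2 * (P M).toReal ≤ ∫ ω in M, (inner ℝ θ (δ ω) : ℝ) ^ 2 ∂P) :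
    (P M).toReal ≤ ε * B ^ 2 / lam := by
  set f : Ω → ℝ := fun ω => (inner ℝ θ (δ ω) : ℝ) with hf
  have hfm : Measurable f := measurable_const.inner hδ
  set S : Set Ω := {ω | 0 < f ω} with hS
  have hSm : MeasurableSet S := measurableSet_lt measurable_const hfm
  set C : ℝ := ‖θ‖ ^ 2 * B ^ 2 with hC
  have hC0 : 0 ≤ C := by positivity
  -- pointwise a.e. bound : indicator M f² ≤ indicator S C
  have hbound : ∀ᵐ ω ∂P,
      M.indicator (fun ω => f ω ^ 2) ω ≤ S.indicator (fun _ => C) ω := by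
    filter_upwards [h1, h2] with ω h1ω h2ω
    by_cases hωS : ω ∈ S
    · rw [Set.indicator_of_mem hωS]
      by_cases hωM : ω ∈ M
      · rw [Set.indicator_of_mem hωM]
        have h := abs_real_inner_le_norm θ (δ ω)
        have : f ω ^ 2 ≤ (‖θ‖ * ‖δ ω‖) ^ 2 := by
          rw [← sq_abs]
          exact pow_le_pow_left₀ (abs_nonneg _) h 2
        calc f ω ^ 2 ≤ (‖θ‖ * ‖δ ω‖) ^ 2 := this
          _ = ‖θ‖ ^ 2 * ‖δ ω‖ ^ 2 := by ring
          _ ≤ ‖θ‖ ^ 2 * B ^ 2 := by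
              have := pow_le_pow_left₀ (norm_nonneg (δ ω)) h2ω 2
              nlinarith [sq_nonneg ‖θ‖]
      · rw [Set.indicator_of_notMem hωM]; exact hC0
    · rw [Set.indicator_of_notMem hωS]
      have hf0 : f ω = 0 := le_antisymm (not_lt.mp hωS) h1ω
      by_cases hωM : ω ∈ M
      · rw [Set.indicator_of_mem hωM, hf0]; norm_num
      · rw [Set.indicator_of_notMem hωM]
  -- integrability
  have hintR : Integrable (S.indicator (fun _ : Ω => C)) P :=
    (integrable_const C).indicator hSm
  have hintL : Integrable (M.indicator (fun ω => f ω ^ 2)) P := by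
    refine (Integrable.mono' (integrable_const C) ?_ ?_).indicator hM
    · exact (hfm.pow_const 2).aestronglyMeasurable
    · filter_upwards [h1, h2] with ω h1ω h2ω
      rw [Real.norm_eq_abs, abs_of_nonneg (sq_nonneg _)]
      have h := abs_real_inner_le_norm θ (δ ω)
      have : f ω ^ 2 ≤ (‖θ‖ * ‖δ ω‖) ^ 2 := by
        rw [← sq_abs]; exact pow_le_pow_left₀ (abs_nonneg _) h 2
      have h2' := pow_le_pow_left₀ (norm_nonneg (δ ω)) h2ω 2
      nlinarith [sq_nonneg ‖θ‖]
  -- compare integrals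
  have key : ∫ ω in M, f ω ^ 2 ∂P ≤ C * (P S).toReal := by
    have h5 : ∫ ω in M, f ω ^ 2 ∂P = ∫ ω, M.indicator (fun ω => f ω ^ 2) ω ∂P :=
      (integral_indicator hM).symm
    have h6 : ∫ ω, S.indicator (fun _ => C) ω ∂P = C * (P S).toReal := by
      rw [integral_indicator_const _ hSm, smul_eq_mul, mul_comm, measureReal_def]
    rw [h5, ← h6]
    exact integral_mono_ae hintL hintR hbound
  have hθ2 : (0:ℝ) < ‖θ‖ ^ 2 := by
    have : 0 < ‖θ‖ := norm_pos_iff.mpr hθ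
    positivity
  have hPS : (P S).toReal ≤ ε := h3
  have main : lam * ‖θ‖ ^ 2 * (P M).toReal ≤ ‖θ‖ ^ 2 * (ε * B ^ 2) := by
    calc lam * ‖θ‖ ^ 2 * (P M).toReal ≤ ∫ ω in M, f ω ^ 2 ∂P := h4
      _ ≤ C * (P S).toReal := key
      _ ≤ C * ε := by
          exact mul_le_mul_of_nonneg_left hPS hC0
      _ = ‖θ‖ ^ 2 * (ε * B ^ 2) := by rw [hC]; ring
  have hp : (P M).toReal * lam ≤ ε * B ^ 2 := by nlinarith
  exact (le_div_iff₀ hlam).mpr hp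
end

section
/- Let (Ω, ℱ, P) be a probability space, d ≥ 1 an integer, δ : Ω → ℝ^d a measurable map, θ ∈ ℝ^d with θ ≠ 0, and let B > 0, λ > 0, γ ≥ 0, ε ∈ [0,1]. Let M ∈ ℱ be an event. Assume: (i) ⟨θ, δ(ω)⟩ ≥ 0 for P-almost every ω; (ii) ‖δ(ω)‖₂ ≤ B for P-almost every ω; (iii) P(⟨θ, δ⟩ > γ) ≤ ε; and (iv) E[1_M · ⟨θ, δ⟩²] ≥ λ ‖θ‖₂² P(M). Then P(M) ≤ ε B² / λ + γ² / (λ ‖θ‖₂²). -/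
open MeasureTheory

/-- Measure-theoretic core of the slack-SCP generalization bound:
if `⟪θ,δ⟫ ≥ 0` a.s., `‖δ‖ ≤ B` a.s., `P(⟪θ,δ⟫ > γ) ≤ ε`, and
`E[1_M ⟪θ,δ⟫²] ≥ λ‖θ‖² P(M)`, then
`P(M) ≤ ε B² / λ + γ² / (λ ‖θ‖²)`. -/
theorem action_mismatch_le_of_covariance_diversity_slack
    {Ω : Type*} [MeasurableSpace Ω] (P : Measure Ω) [IsProbabilityMeasure P]
    {d : ℕ} (hd : 1 ≤ d)
    (δ : Ω → EuclideanSpace ℝ (Fin d)) (hδ : Measurable δ)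
    (θ : EuclideanSpace ℝ (Fin d)) (hθ : θ ≠ 0)
    (B lam γ ε : ℝ) (hB : 0 < B) (hlam : 0 < lam) (hγ : 0 ≤ γ)
    (hε0 : 0 ≤ ε) (hε1 : ε ≤ 1)
    (M : Set Ω) (hM : MeasurableSet M)
    (h1 : ∀ᵐ ω ∂P, 0 ≤ (inner ℝ θ (δ ω) : ℝ))
    (h2 : ∀ᵐ ω ∂P, ‖δ ω‖ ≤ B)
    (h3 : (P {ω | γ < (inner ℝ θ (δ ω) : ℝ)}).toReal ≤ ε)
    (h4 : lam * ‖θ‖ ^ 2 * (P M).toReal ≤ ∫ ω in M, (inner ℝ θ (δ ω) : ℝ) ^ 2 ∂P) :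
    (P M).toReal ≤ ε * B ^ 2 / lam + γ ^ 2 / (lam * ‖θ‖ ^ 2) := by
  classical
  set f : Ω → ℝ := fun ω => (inner ℝ θ (δ ω) : ℝ) with hf_def
  have hf : Measurable f := measurable_const.inner hδ
  set A : Set Ω := {ω | γ < f ω} with hA_def
  have hAmeas : MeasurableSet A := measurableSet_lt measurable_const hf
  have hθpos : 0 < ‖θ‖ := norm_pos_iff.mpr hθ
  set c : ℝ := ‖θ‖ ^ 2 * B ^ 2 with hc_def
  have hc0 : 0 ≤ c := by positivity
  have hbound : ∀ᵐ ω ∂P, f ω ^ 2 ≤ A.indicator (fun _ => c) ω + γ ^ 2 := by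
    filter_upwards [h1, h2] with ω h1ω h2ω
    by_cases hω : ω ∈ A
    · have habs : |f ω| ≤ ‖θ‖ * B := by
        calc |f ω| ≤ ‖θ‖ * ‖δ ω‖ := by simpa [hf_def] using abs_real_inner_le_norm θ (δ ω)
          _ ≤ ‖θ‖ * B := by nlinarith [norm_nonneg θ, norm_nonneg (δ ω)]
      have hsq : f ω ^ 2 ≤ (‖θ‖ * B) ^ 2 := by
        nlinarith [abs_nonneg (f ω), sq_abs (f ω)]
      rw [Set.indicator_of_mem hω]
      nlinarith [sq_nonneg γ]
    · have hle : f ω ≤ γ := le_of_not_gt hω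
      have h1ω' : (0:ℝ) ≤ f ω := h1ω
      rw [Set.indicator_of_notMem hω]
      nlinarith
  have hfsq : Integrable (fun ω => f ω ^ 2) P := by
    refine (integrable_const ((‖θ‖ * B) ^ 2)).mono' ((hf.pow_const 2).aestronglyMeasurable) ?_
    filter_upwards [h2] with ω h2ω
    have habs : |f ω| ≤ ‖θ‖ * B := by
      calc |f ω| ≤ ‖θ‖ * ‖δ ω‖ := by simpa [hf_def] using abs_real_inner_le_norm θ (δ ω)
        _ ≤ ‖θ‖ * B := by nlinarith [norm_nonneg θ, norm_nonneg (δ ω)]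
    have : |f ω ^ 2| = |f ω| ^ 2 := by rw [abs_pow]
    simp only [Real.norm_eq_abs, this]
    nlinarith [abs_nonneg (f ω)]
  have hind : Integrable (A.indicator (fun _ => c)) P := (integrable_const c).indicator hAmeas
  have hg : Integrable (fun ω => A.indicator (fun _ => c) ω + γ ^ 2) P :=
    hind.add (integrable_const _)
  have hgnn : 0 ≤ᵐ[P] fun ω => A.indicator (fun _ => c) ω + γ ^ 2 := by
    refine Filter.Eventually.of_forall fun ω => ?_
    simp only [Pi.zero_apply]
    have h := Set.indicator_nonneg (fun _ _ => hc0) (s := A) ω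
    nlinarith [sq_nonneg γ]
  have key : ∫ ω in M, f ω ^ 2 ∂P ≤ ε * c + γ ^ 2 := by
    calc ∫ ω in M, f ω ^ 2 ∂P
        ≤ ∫ ω in M, (A.indicator (fun _ => c) ω + γ ^ 2) ∂P := by
          refine setIntegral_mono_ae hfsq.integrableOn hg.integrableOn ?_
          exact hbound
      _ ≤ ∫ ω, (A.indicator (fun _ => c) ω + γ ^ 2) ∂P := setIntegral_le_integral hg hgnn
      _ = c * (P A).toReal + γ ^ 2 := by
          rw [integral_add hind (integrable_const _), integral_indicator_const _ hAmeas,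
            integral_const]
          simp [mul_comm, Measure.real_def]
      _ ≤ ε * c + γ ^ 2 := by nlinarith [h3]
  have hmain : lam * ‖θ‖ ^ 2 * (P M).toReal ≤ ε * c + γ ^ 2 := le_trans h4 key
  have hpos : 0 < lam * ‖θ‖ ^ 2 := by positivity
  have hdiv : (P M).toReal ≤ (ε * c + γ ^ 2) / (lam * ‖θ‖ ^ 2) := by
    rw [le_div_iff₀ hpos]; linarith
  have heq : (ε * c + γ ^ 2) / (lam * ‖θ‖ ^ 2) = ε * B ^ 2 / lam + γ ^ 2 / (lam * ‖θ‖ ^ 2) := by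
    rw [hc_def]; field_simp
  linarith [heq ▸ hdiv]
end

section
/- Let (Ω, ℱ, P) be a probability space, N and d integers with N ≥ d ≥ 1, and X : Ω → ℝ a random variable with 0 ≤ X ≤ 1 almost surely. Assume that for every ε ∈ (0,1], P(X > ε) ≤ Σ_{i=0}^{d-1} C(N,i) ε^i (1−ε)^{N−i}. Then E[X] ≤ d/(N+1). -/
open MeasureTheory

open Set intervalIntegral in

lemma beta_nat : ∀ (m i : ℕ), ∫ x in (0:ℝ)..1, x ^ i * (1 - x) ^ m
    = (i.factorial * m.factorial : ℝ) / (i + m + 1).factorial := by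
  intro m
  induction m with
  | zero =>
    intro i
    have : (i.factorial:ℝ) ≠ 0 := by positivity
    simp [integral_pow, Nat.factorial_succ]
    field_simp
  | succ m IH =>
    intro i
    have hi : ((i : ℝ) + 1) ≠ 0 := by positivity
    have hu : ∀ x ∈ Set.uIcc (0:ℝ) 1,
        HasDerivAt (fun x : ℝ => (1 - x) ^ (m + 1))
          (-(((m:ℝ) + 1) * (1 - x) ^ m)) x := by
      intro x _
      have h := ((hasDerivAt_id x).const_sub (1:ℝ)).pow (m + 1)
      refine h.congr_deriv ?_
      push_cast
      simp
    have hv : ∀ x ∈ Set.uIcc (0:ℝ) 1,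
        HasDerivAt (fun x : ℝ => x ^ (i + 1) / ((i:ℝ) + 1)) (x ^ i) x := by
      intro x _
      have h := (hasDerivAt_pow (i + 1) x).div_const ((i:ℝ) + 1)
      refine h.congr_deriv ?_
      push_cast
      field_simp
    have hu' : IntervalIntegrable (fun x : ℝ => -(((m:ℝ) + 1) * (1 - x) ^ m))
        volume 0 1 := (Continuous.intervalIntegrable (by continuity) _ _)
    have hv' : IntervalIntegrable (fun x : ℝ => x ^ i) volume 0 1 :=
      (Continuous.intervalIntegrable (by continuity) _ _)
    have ibp := intervalIntegral.integral_mul_deriv_eq_deriv_mul hu hv hu' hv'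
    have lhs_eq : ∫ x in (0:ℝ)..1, x ^ i * (1 - x) ^ (m + 1)
        = ∫ x in (0:ℝ)..1, (1 - x) ^ (m + 1) * x ^ i := by
      apply intervalIntegral.integral_congr
      intro x _; ring
    rw [lhs_eq, ibp]
    have rhs_eq : ∫ x in (0:ℝ)..1,
        -(((m:ℝ) + 1) * (1 - x) ^ m) * (x ^ (i + 1) / ((i:ℝ) + 1))
        = (-(((m:ℝ) + 1) / ((i:ℝ) + 1))) * ∫ x in (0:ℝ)..1, x ^ (i + 1) * (1 - x) ^ m := by
      rw [← intervalIntegral.integral_const_mul]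
      apply intervalIntegral.integral_congr
      intro x _; field_simp
    rw [rhs_eq, IH (i + 1)]
    simp only [Nat.factorial_succ]
    push_cast
    have hm : i + 1 + m = i + (m + 1) := by omega
    rw [hm]
    have h2 : ((i + (m + 1)).factorial : ℝ) ≠ 0 := by positivity
    have h3 : (i.factorial : ℝ) ≠ 0 := by positivity
    norm_num
    field_simp
    ring

/-- Expected mismatch probability for the incenter estimator: if a `[0,1]`-valued
random variable `X` has tail `P(X > ε)` bounded by the binomial lower tail
`Σ_{i=0}^{d-1} C(N,i) ε^i (1-ε)^{N-i}` for every `ε ∈ (0,1]`, then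
`E[X] ≤ d/(N+1)`. -/
theorem expected_mismatch_le
    {Ω : Type*} [MeasurableSpace Ω] (P : Measure Ω) [IsProbabilityMeasure P]
    (N d : ℕ) (hd : 1 ≤ d) (hNd : d ≤ N)
    (X : Ω → ℝ) (hX : Measurable X)
    (h0 : ∀ᵐ ω ∂P, 0 ≤ X ω) (h1 : ∀ᵐ ω ∂P, X ω ≤ 1)
    (htail : ∀ ε : ℝ, 0 < ε → ε ≤ 1 →
      (P {ω | ε < X ω}).toReal ≤
        ∑ i ∈ Finset.range d, (N.choose i : ℝ) * ε ^ i * (1 - ε) ^ (N - i)) :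
    ∫ ω, X ω ∂P ≤ (d : ℝ) / ((N : ℝ) + 1) := by
  open Set in
  set g : ℝ → ℝ := fun t => (P {ω | t < X ω}).toReal with hg
  set F : ℝ → ℝ := fun t =>
      ∑ i ∈ Finset.range d, (N.choose i : ℝ) * t ^ i * (1 - t) ^ (N - i) with hF
  -- integrability of X
  have hXint : Integrable X P := by
    refine Integrable.mono' (integrable_const (1:ℝ)) hX.aestronglyMeasurable ?_
    filter_upwards [h0, h1] with ω hω0 hω1
    rw [Real.norm_eq_abs, abs_of_nonneg hω0]; exact hω1
  -- layer cake
  have hlayer : ∫ ω, X ω ∂P = ∫ t in Ioi (0:ℝ), g t :=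
    hXint.integral_eq_integral_meas_lt h0
  -- restrict to Ioc 0 1
  have hzero : ∀ t : ℝ, 1 ≤ t → g t = 0 := by
    intro t ht
    have h10 : P {ω | 1 < X ω} = 0 := by
      rw [measure_eq_zero_iff_ae_notMem]
      filter_upwards [h1] with ω hω
      simpa using not_lt.mpr hω
    have : P {ω | t < X ω} = 0 :=
      measure_mono_null (fun ω hω => lt_of_le_of_lt ht hω) h10
    simp [hg, this]
  have hres : ∫ t in Ioi (0:ℝ), g t = ∫ t in Ioc (0:ℝ) 1, g t := by
    refine setIntegral_eq_of_subset_of_ae_diff_eq_zero nullMeasurableSet_Ioi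
      Ioc_subset_Ioi_self ?_
    refine Filter.Eventually.of_forall fun t ht => ?_
    have : 1 < t := by
      rcases ht with ⟨ht1, ht2⟩
      simp only [mem_Ioc, not_and, not_le] at ht2
      exact ht2 (mem_Ioi.mp ht1)
    exact hzero t this.le
  -- g is antitone, hence integrable on Ioc 0 1
  have hganti : Antitone g := by
    intro s t hst
    exact ENNReal.toReal_mono (measure_ne_top P _)
      (measure_mono fun ω hω => lt_of_le_of_lt hst hω)
  have hgint : IntegrableOn g (Ioc 0 1) volume := by
    rw [← intervalIntegrable_iff_integrableOn_Ioc_of_le zero_le_one]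
    exact hganti.intervalIntegrable
  have hFcont : Continuous F := by
    apply continuous_finset_sum
    intro i _
    exact (continuous_const.mul (continuous_pow i)).mul
      ((continuous_const.sub continuous_id).pow (N - i))
  have hFint : IntegrableOn F (Ioc 0 1) volume := by
    rw [← intervalIntegrable_iff_integrableOn_Ioc_of_le zero_le_one]
    exact hFcont.intervalIntegrable _ _
  -- comparison
  have hcomp : ∫ t in Ioc (0:ℝ) 1, g t ≤ ∫ t in Ioc (0:ℝ) 1, F t := by
    refine setIntegral_mono_on hgint hFint measurableSet_Ioc ?_
    intro t ht
    exact htail t ht.1 ht.2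
  -- compute the integral of F
  have hterm : ∀ i ∈ Finset.range d,
      ∫ t in (0:ℝ)..1, (N.choose i : ℝ) * t ^ i * (1 - t) ^ (N - i)
        = 1 / ((N : ℝ) + 1) := by
    intro i hi
    have hiN : i ≤ N := le_trans (Nat.le_of_lt_succ (Nat.lt_succ_of_lt (Finset.mem_range.mp hi))) hNd
    have heq : ∀ t : ℝ, (N.choose i : ℝ) * t ^ i * (1 - t) ^ (N - i)
        = (N.choose i : ℝ) * (t ^ i * (1 - t) ^ (N - i)) := fun t => by ring
    simp_rw [heq]
    rw [intervalIntegral.integral_const_mul, beta_nat]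
    have hsum : i + (N - i) + 1 = N + 1 := by omega
    rw [hsum]
    have hchoose : (N.choose i : ℝ) * (i.factorial * (N - i).factorial) = N.factorial := by
      rw [← Nat.cast_mul, ← Nat.cast_mul, ← mul_assoc,
        Nat.choose_mul_factorial_mul_factorial hiN]
    have hf1 : ((N + 1).factorial : ℝ) = ((N : ℝ) + 1) * N.factorial := by
      rw [Nat.factorial_succ]; push_cast; ring
    have hNf : (N.factorial : ℝ) ≠ 0 := by positivity
    have hN1 : ((N : ℝ) + 1) ≠ 0 := by positivity
    rw [hf1, ← mul_div_assoc, hchoose]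
    rw [mul_comm ((N:ℝ) + 1), ← div_div, div_self hNf]
  have hFval : ∫ t in Ioc (0:ℝ) 1, F t = (d : ℝ) / ((N : ℝ) + 1) := by
    rw [← intervalIntegral.integral_of_le zero_le_one]
    rw [hF]
    rw [intervalIntegral.integral_finset_sum]
    · rw [Finset.sum_congr rfl hterm, Finset.sum_const, Finset.card_range, nsmul_eq_mul]
      ring
    · intro i _
      exact Continuous.intervalIntegrable
        ((continuous_const.mul (continuous_pow i)).mul
          ((continuous_const.sub continuous_id).pow (N - i))) _ _
  rw [hlayer, hres]
  rw [hFval] at hcomp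
  exact hcomp
end

section
/- Let ψ(s,(a₁,a₂)) := (a₁, a₂, s·a₂) ∈ ℝ³, let θ := (2,−2,6), and for s ∈ {0,1} let a*(s) := (1, 2s − 1) ∈ [−1,1]². Then for every s ∈ {0,1} and every a ∈ [−1,1]², the strict-margin (incenter) constraint holds: ⟨θ, ψ(s,a) − ψ(s,a*(s))⟩ ≤ −‖ψ(s,a) − ψ(s,a*(s))‖₂. -/
/-- Appendix claim revisiting Example 1: with feature map
`ψ(s,(a₁,a₂)) = (a₁, a₂, s·a₂)` and `θ = (2,−2,6)`, the incenter (strict-margin)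
constraint `⟪θ, ψ(s,a) − ψ(s,a*(s))⟫ ≤ −‖ψ(s,a) − ψ(s,a*(s))‖` holds for both
states `s ∈ {0,1}` and all actions `a ∈ [−1,1]²`, where `a*(s) = (1, 2s−1)`. -/
theorem incenter_feasible_example
    (ψ : ℝ → ℝ × ℝ → EuclideanSpace ℝ (Fin 3))
    (hψ : ∀ s a, ψ s a = ![a.1, a.2, s * a.2])
    (θ : EuclideanSpace ℝ (Fin 3)) (hθ : θ = !₂[2, -2, 6]) :
    ∀ s : ℝ, s = 0 ∨ s = 1 →
      ∀ a ∈ Set.Icc (-1 : ℝ) 1 ×ˢ Set.Icc (-1 : ℝ) 1,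
        (inner ℝ θ (ψ s a - ψ s (1, 2 * s - 1)) : ℝ) ≤
          -‖ψ s a - ψ s (1, 2 * s - 1)‖ := by
  intro s hs a ha
  obtain ⟨⟨h1, h2⟩, ⟨h3, h4⟩⟩ := ha
  have hψ' : ∀ s a, ψ s a = WithLp.toLp 2 ![a.1, a.2, s * a.2] := fun s a => by rw [← hψ]
  rw [hψ', hψ', hθ]
  have hsub : (WithLp.toLp 2 ![a.1, a.2, s * a.2] - WithLp.toLp 2 ![(1:ℝ), 2*s-1, s*(2*s-1)] : EuclideanSpace ℝ (Fin 3))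
      = WithLp.toLp 2 ![a.1 - 1, a.2 - (2*s-1), s*a.2 - s*(2*s-1)] := by
    ext i; fin_cases i <;> simp [EuclideanSpace.norm_eq]
  rw [hsub, EuclideanSpace.norm_eq]
  simp only [PiLp.inner_apply, RCLike.inner_apply, Fin.sum_univ_three,
    Matrix.cons_val_zero, Matrix.cons_val_one, Matrix.head_cons,
    Matrix.cons_val_two, Matrix.tail_cons, starRingEnd_apply, star_trivial,
    Real.norm_eq_abs, sq_abs]
  rw [le_neg, ← neg_neg (Real.sqrt _)]
  apply neg_le_neg
  have key : ∀ I : ℝ, 0 ≤ -I →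
      ((a.1-1)^2 + (a.2-(2*s-1))^2 + (s*a.2 - s*(2*s-1))^2) ≤ I^2 →
      Real.sqrt ((a.1-1)^2 + (a.2-(2*s-1))^2 + (s*a.2 - s*(2*s-1))^2) ≤ -I := by
    intro I hI hle
    calc Real.sqrt _ ≤ Real.sqrt ((-I)^2) := Real.sqrt_le_sqrt (by nlinarith)
    _ = -I := Real.sqrt_sq hI
  rcases hs with rfl | rfl
  · have := key (2 * (a.1 - 1) + -2 * (a.2 - (2*0-1)) + 6 * (0*a.2 - 0*(2*0-1)))
      (by nlinarith) (by nlinarith)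
    linarith [this]
  · have := key (2 * (a.1 - 1) + -2 * (a.2 - (2*1-1)) + 6 * (1*a.2 - 1*(2*1-1)))
      (by nlinarith) (by nlinarith)
    linarith [this]
end
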